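/- For every k ≥ 1 there exists a triangulation T of the n-gon with n = 3·2^k that contains no diameter and in which every boundary edge is layered by at most k chords, i.e., m_T(e) ≤ 2k for every boundary edge e. Hence 3·2^k is the largest order of a triangulation in which every boundary edge has layer number at most k. -/

import Mathlib

open scoped Classical

/-- The cyclic distance between two vertices of the `n`-gon labeled by `ZMod n`:
`min (k, n - k)` where `k` is the representative of `b - a`. -/
def cycDist {n : ℕ} (a b : ZMod n) : ℕ := min (b - a).val (a - b).val

/-- The length of an unordered pair of vertices (in particular, of a chord). -/
def chordLen {n : ℕ} (p : Sym2 (ZMod n)) : ℕ :=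
  Sym2.lift ⟨fun a b => cycDist a b, fun _ _ => min_comm _ _⟩ p

/-- `x` lies strictly inside the clockwise arc from `a` to `b`. -/
def InArc {n : ℕ} (a b x : ZMod n) : Prop :=
  0 < (x - a).val ∧ (x - a).val < (b - a).val

/-- Two chords cross: their four endpoints are distinct and exactly one endpoint of the
second chord lies strictly inside the clockwise arc from `a` to `b`. -/
def Crosses {n : ℕ} (p q : Sym2 (ZMod n)) : Prop :=
  ∃ a b c d : ZMod n, p = s(a, b) ∧ q = s(c, d) ∧
    a ≠ b ∧ a ≠ c ∧ a ≠ d ∧ b ≠ c ∧ b ≠ d ∧ c ≠ d ∧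
    Xor' (InArc a b c) (InArc a b d)

/-- A triangulation of the `n`-gon: a set of `n - 3` pairwise non-crossing chords
(each chord having length at least 2). -/
def IsTriangulation (n : ℕ) (T : Finset (Sym2 (ZMod n))) : Prop :=
  T.card = n - 3 ∧ (∀ p ∈ T, 2 ≤ chordLen p) ∧
    ∀ p ∈ T, ∀ q ∈ T, p ≠ q → ¬ Crosses p q

/-- The total chord length of a triangulation. -/
def TCL (n : ℕ) (T : Finset (Sym2 (ZMod n))) : ℕ := ∑ p ∈ T, chordLen p

/-- A diameter is a chord of length `n / 2` (only possible for `n` even). -/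
def IsDiameter {n : ℕ} (p : Sym2 (ZMod n)) : Prop := 2 * chordLen p = n

/-- The chord `p` layers the boundary edge `{i, i + 1}`: the edge lies on the (strictly)
shorter of the two arcs between the endpoints of `p`.  (Diameters never layer an edge.) -/
def LayersEdge {n : ℕ} (p : Sym2 (ZMod n)) (i : ZMod n) : Prop :=
  ∃ a b : ZMod n, p = s(a, b) ∧ (b - a).val < (a - b).val ∧ (i - a).val < (b - a).val

/-- The doubled layer number of the boundary edge `{i, i + 1}`:
twice the number of non-diameter chords layering it, plus the number of diameters. -/
noncomputable def mT (n : ℕ) (T : Finset (Sym2 (ZMod n))) (i : ZMod n) : ℕ :=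
  2 * (T.filter (fun p => LayersEdge p i ∧ ¬ IsDiameter p)).card +
    (T.filter (fun p => IsDiameter p)).card

/-- Subdivision of a triangulation of the `n`-gon at the boundary edge `{n-1, 0}`:
re-embed all chords (via representatives in `{0, …, n-1}`) into the `(n+1)`-gon, whose new
vertex `n` lies between `n - 1` and `0`, and add the chord `{n - 1, 0}`. -/
def subdiv (n : ℕ) (T : Finset (Sym2 (ZMod n))) : Finset (Sym2 (ZMod (n + 1))) :=
  T.image (Sym2.map (fun a : ZMod n => ((a.val : ℕ) : ZMod (n + 1)))) ∪
    {s(((n - 1 : ℕ) : ZMod (n + 1)), (0 : ZMod (n + 1)))}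

/-- Doubling construction: subdivide every boundary edge of the `m`-gon (old vertex `a`
becomes `2a` in the `2m`-gon) and add the chord `{2a, 2a+2}` over each new vertex. -/
def doubleTri (m : ℕ) (T : Finset (Sym2 (ZMod m))) : Finset (Sym2 (ZMod (2 * m))) :=
  T.image (Sym2.map (fun a : ZMod m => ((2 * a.val : ℕ) : ZMod (2 * m)))) ∪
    (Finset.range m).image
      (fun a : ℕ => s(((2 * a : ℕ) : ZMod (2 * m)), ((2 * a + 2 : ℕ) : ZMod (2 * m))))

section Toolkit
variable {n : ℕ} [NeZero n]

lemma val_add_cases (x y : ZMod n) :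
    (x.val + y.val < n ∧ (x + y).val = x.val + y.val) ∨
      (n ≤ x.val + y.val ∧ (x + y).val = x.val + y.val - n) := by
  have hx := x.val_lt
  have hy := y.val_lt
  rcases Nat.lt_or_ge (x.val + y.val) n with h | h
  · exact Or.inl ⟨h, by rw [ZMod.val_add, Nat.mod_eq_of_lt h]⟩
  · refine Or.inr ⟨h, ?_⟩
    rw [ZMod.val_add, Nat.mod_eq_sub_mod h, Nat.mod_eq_of_lt (by omega)]

lemma val_sub_add {a b : ZMod n} (h : a ≠ b) : (a - b).val + (b - a).val = n := by
  have h0 : (a - b) + (b - a) = 0 := by ring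
  have h1 : (a - b).val ≠ 0 := by
    simp only [ne_eq, ZMod.val_eq_zero, sub_eq_zero]; exact h
  have h2 : (b - a).val ≠ 0 := by
    simp only [ne_eq, ZMod.val_eq_zero, sub_eq_zero]; exact fun hh => h hh.symm
  rcases val_add_cases (a - b) (b - a) with ⟨h3, h4⟩ | ⟨h3, h4⟩ <;>
    rw [h0, ZMod.val_zero] at h4
  · omega
  · have := (a - b).val_lt; have := (b - a).val_lt; omega

lemma val_sub_ne_zero {a b : ZMod n} (h : a ≠ b) : (b - a).val ≠ 0 := by
  simp only [ne_eq, ZMod.val_eq_zero, sub_eq_zero]; exact fun hh => h hh.symm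

lemma eq_of_val_sub_eq {a b c : ZMod n} (h : (b - a).val = (c - a).val) : b = c := by
  have h2 : b - a = c - a := ZMod.val_injective n h
  have h3 := congrArg (· + a) h2
  simpa using h3

noncomputable def arcF (a : ZMod n) (ℓ : ℕ) : Finset (ZMod n) :=
  Finset.univ.filter (fun i => (i - a).val < ℓ)

lemma mem_arcF {a : ZMod n} {ℓ : ℕ} {i : ZMod n} : i ∈ arcF a ℓ ↔ (i - a).val < ℓ := by
  simp [arcF]

lemma inArc_rev {a b x : ZMod n} (hab : a ≠ b) (hxa : x ≠ a) (hxb : x ≠ b) :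
    InArc b a x ↔ ¬ InArc a b x := by
  have h1 := val_sub_add hab
  have h2 : (x - b) = (x - a) + (a - b) := by ring
  have h3 := val_add_cases (x - a) (a - b)
  rw [← h2] at h3
  have h4 : (x - a).val ≠ 0 := val_sub_ne_zero hxa.symm
  have h5 : (x - a).val ≠ (b - a).val := fun h => hxb (eq_of_val_sub_eq h)
  have h6 := (x - a).val_lt
  have h7 := (b - a).val_lt
  unfold InArc
  rcases h3 with ⟨hc, he⟩ | ⟨hc, he⟩ <;> rw [he] <;> omega

lemma key_nested {a b c d : ZMod n}
    (hl2 : 2 * (b - a).val < n) (hm2 : 2 * (d - c).val < n)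
    (hab : a ≠ b) (hcd : c ≠ d)
    (hiff : a ≠ c → a ≠ d → b ≠ c → b ≠ d → (InArc a b c ↔ InArc a b d)) :
    arcF a (b - a).val ⊆ arcF c (d - c).val ∨
      arcF c (d - c).val ⊆ arcF a (b - a).val ∨
      Disjoint (arcF a (b - a).val) (arcF c (d - c).val) := by
  have hl0 : (b - a).val ≠ 0 := val_sub_ne_zero hab
  have hm0 : (d - c).val ≠ 0 := val_sub_ne_zero hcd
  by_cases hac : a = c
  · subst hac
    rcases le_total ((d - a).val) ((b - a).val) with h | h
    · refine Or.inr (Or.inl ?_)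
      intro i hi; rw [mem_arcF] at hi ⊢; omega
    · refine Or.inl ?_
      intro i hi; rw [mem_arcF] at hi ⊢; omega
  by_cases had : a = d
  · subst had
    have h4 := val_sub_add hac
    refine Or.inr (Or.inr (Finset.disjoint_left.mpr ?_))
    intro i hi1 hi2
    rw [mem_arcF] at hi1 hi2
    have h2 : (i - a) = (i - c) + (c - a) := by ring
    have h3 := val_add_cases (i - c) (c - a)
    rw [← h2] at h3
    rcases h3 with ⟨hc2, he2⟩ | ⟨hc2, he2⟩ <;> omega
  by_cases hbc : b = c
  · subst hbc
    refine Or.inr (Or.inr (Finset.disjoint_left.mpr ?_))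
    intro i hi1 hi2
    rw [mem_arcF] at hi1 hi2
    have h2 : (i - a) = (i - b) + (b - a) := by ring
    have h3 := val_add_cases (i - b) (b - a)
    rw [← h2] at h3
    have h6 := (i - b).val_lt
    rcases h3 with ⟨hc2, he2⟩ | ⟨hc2, he2⟩ <;> omega
  by_cases hbd : b = d
  · subst hbd
    have hβ : (b - a) = (b - c) + (c - a) := by ring
    have h3 := val_add_cases (b - c) (c - a)
    rw [← hβ] at h3
    rcases h3 with ⟨hc1, he1⟩ | ⟨hc1, he1⟩
    · -- no wrap: (b-a).val = (b-c).val + (c-a).val, B ⊆ A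
      refine Or.inr (Or.inl ?_)
      intro i hi; rw [mem_arcF] at hi ⊢
      have h2 : (i - a) = (i - c) + (c - a) := by ring
      have h4 := val_add_cases (i - c) (c - a)
      rw [← h2] at h4
      have := (c - a).val_lt
      rcases h4 with ⟨hc2, he2⟩ | ⟨hc2, he2⟩ <;> omega
    · -- wrap: A ⊆ B
      refine Or.inl ?_
      intro i hi; rw [mem_arcF] at hi ⊢
      have h2 : (i - c) = (i - a) + (a - c) := by ring
      have h4 := val_add_cases (i - a) (a - c)
      rw [← h2] at h4
      have h5 : (a - c).val + (c - a).val = n := val_sub_add hac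
      rcases h4 with ⟨hc2, he2⟩ | ⟨hc2, he2⟩ <;> omega
  -- all four distinct
  have hIff : InArc a b c ↔ InArc a b d := hiff hac had hbc hbd
  have hα0 : (c - a).val ≠ 0 := val_sub_ne_zero hac
  have hβ0 : (d - a).val ≠ 0 := val_sub_ne_zero had
  have hαl : (c - a).val ≠ (b - a).val := fun h => hbc ((eq_of_val_sub_eq h).symm)
  have hβl : (d - a).val ≠ (b - a).val := fun h => hbd ((eq_of_val_sub_eq h).symm)
  have hβrel : (d - a) = (d - c) + (c - a) := by ring
  have h3 := val_add_cases (d - c) (c - a)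
  rw [← hβrel] at h3
  have hαlt := (c - a).val_lt
  have hβlt := (d - a).val_lt
  unfold InArc at hIff
  rcases h3 with ⟨hc1, he1⟩ | ⟨hc1, he1⟩
  · -- no wrap : β = m + α
    by_cases hcase : (c - a).val < (b - a).val
    · -- B ⊆ A
      have hβsm : (d - a).val < (b - a).val := by
        rcases hIff.mp ⟨by omega, hcase⟩ with ⟨h1', h2'⟩; omega
      refine Or.inr (Or.inl ?_)
      intro i hi; rw [mem_arcF] at hi ⊢
      have h2 : (i - a) = (i - c) + (c - a) := by ring
      have h4 := val_add_cases (i - c) (c - a)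
      rw [← h2] at h4
      rcases h4 with ⟨hc2, he2⟩ | ⟨hc2, he2⟩ <;> omega
    · -- disjoint
      refine Or.inr (Or.inr (Finset.disjoint_left.mpr ?_))
      intro i hi1 hi2
      rw [mem_arcF] at hi1 hi2
      have h2 : (i - a) = (i - c) + (c - a) := by ring
      have h4 := val_add_cases (i - c) (c - a)
      rw [← h2] at h4
      rcases h4 with ⟨hc2, he2⟩ | ⟨hc2, he2⟩ <;> omega
  · -- wrap : β = m + α - n
    by_cases hcase : (c - a).val < (b - a).val
    · omega
    · -- A ⊆ B
      have hβbig : ¬ ((d - a).val < (b - a).val) := by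
        intro h
        exact hcase (hIff.mpr ⟨by omega, h⟩).2
      refine Or.inl ?_
      intro i hi; rw [mem_arcF] at hi ⊢
      have h2 : (i - c) = (i - a) + (a - c) := by ring
      have h4 := val_add_cases (i - a) (a - c)
      rw [← h2] at h4
      have h5 : (a - c).val + (c - a).val = n := val_sub_add hac
      rcases h4 with ⟨hc2, he2⟩ | ⟨hc2, he2⟩ <;> omega

lemma inArc_iff_of_laminar {a b c d : ZMod n}
    (hl2 : 2 * (b - a).val < n) (hm2 : 2 * (d - c).val < n)
    (hab : a ≠ b) (hcd : c ≠ d)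
    (hac : a ≠ c) (had : a ≠ d) (hbc : b ≠ c) (hbd : b ≠ d)
    (hlam : arcF a (b - a).val ⊆ arcF c (d - c).val ∨
      arcF c (d - c).val ⊆ arcF a (b - a).val ∨
      Disjoint (arcF a (b - a).val) (arcF c (d - c).val)) :
    InArc a b c ↔ InArc a b d := by
  have hl0 : (b - a).val ≠ 0 := val_sub_ne_zero hab
  have hm0 : (d - c).val ≠ 0 := val_sub_ne_zero hcd
  have hα0 : (c - a).val ≠ 0 := val_sub_ne_zero hac
  have hβ0 : (d - a).val ≠ 0 := val_sub_ne_zero had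
  have hαl : (c - a).val ≠ (b - a).val := fun h => hbc ((eq_of_val_sub_eq h).symm)
  have hβl : (d - a).val ≠ (b - a).val := fun h => hbd ((eq_of_val_sub_eq h).symm)
  have hαlt := (c - a).val_lt
  have hβlt := (d - a).val_lt
  have hsum := val_sub_add hac  -- (a-c).val + (c-a).val = n
  have hβrel : (d - a) = (d - c) + (c - a) := by ring
  have h3 := val_add_cases (d - c) (c - a)
  rw [← hβrel] at h3
  rcases hlam with hsub | hsub | hdis
  · -- A ⊆ B : both false
    have haB : (a - c).val < (d - c).val := by
      have := hsub (mem_arcF.mpr (by rw [sub_self, ZMod.val_zero]; omega))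
      rwa [mem_arcF] at this
    set i₁ : ZMod n := a + (((b - a).val - 1 : ℕ) : ZMod n) with hi₁
    have hi₁a : (i₁ - a).val = (b - a).val - 1 := by
      rw [hi₁]
      have : a + (((b - a).val - 1 : ℕ) : ZMod n) - a = (((b - a).val - 1 : ℕ) : ZMod n) := by
        ring
      rw [this, ZMod.val_cast_of_lt (by omega)]
    have hi₁B : (i₁ - c).val < (d - c).val := by
      have := hsub (mem_arcF.mpr (by rw [hi₁a]; omega))
      rwa [mem_arcF] at this
    have hrel : (i₁ - c) = (i₁ - a) + (a - c) := by ring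
    have h4 := val_add_cases (i₁ - a) (a - c)
    rw [← hrel] at h4
    rw [hi₁a] at h4
    unfold InArc
    rcases h3 with ⟨hc1, he1⟩ | ⟨hc1, he1⟩ <;>
      rcases h4 with ⟨hc2, he2⟩ | ⟨hc2, he2⟩ <;> omega
  · -- B ⊆ A : both true
    have hcA : (c - a).val < (b - a).val := by
      have := hsub (mem_arcF.mpr (by rw [sub_self, ZMod.val_zero]; omega))
      rwa [mem_arcF] at this
    set i₀ : ZMod n := c + (((d - c).val - 1 : ℕ) : ZMod n) with hi₀
    have hi₀c : (i₀ - c).val = (d - c).val - 1 := by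
      rw [hi₀]
      have : c + (((d - c).val - 1 : ℕ) : ZMod n) - c = (((d - c).val - 1 : ℕ) : ZMod n) := by
        ring
      rw [this, ZMod.val_cast_of_lt (by omega)]
    have hi₀A : (i₀ - a).val < (b - a).val := by
      have := hsub (mem_arcF.mpr (by rw [hi₀c]; omega))
      rwa [mem_arcF] at this
    have hrel : (i₀ - a) = (i₀ - c) + (c - a) := by ring
    have h4 := val_add_cases (i₀ - c) (c - a)
    rw [← hrel] at h4
    rw [hi₀c] at h4
    unfold InArc
    rcases h3 with ⟨hc1, he1⟩ | ⟨hc1, he1⟩ <;>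
      rcases h4 with ⟨hc2, he2⟩ | ⟨hc2, he2⟩ <;> omega
  · -- disjoint : both false
    unfold InArc
    have hciff : ¬ (0 < (c - a).val ∧ (c - a).val < (b - a).val) := by
      rintro ⟨h1, h2⟩
      exact Finset.disjoint_left.mp hdis (mem_arcF.mpr h2)
        (mem_arcF.mpr (by rw [sub_self, ZMod.val_zero]; omega))
    have hdiff : ¬ (0 < (d - a).val ∧ (d - a).val < (b - a).val) := by
      rintro ⟨h1, h2⟩
      set j : ZMod n := c + (((d - c).val - 1 : ℕ) : ZMod n) with hj
      have hjc : (j - c).val = (d - c).val - 1 := by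
        rw [hj]
        have : c + (((d - c).val - 1 : ℕ) : ZMod n) - c = (((d - c).val - 1 : ℕ) : ZMod n) := by
          ring
        rw [this, ZMod.val_cast_of_lt (by omega)]
      have hrel : (j - a) = (j - c) + (c - a) := by ring
      have h4 := val_add_cases (j - c) (c - a)
      rw [← hrel] at h4
      rw [hjc] at h4
      have hjA : (j - a).val < (b - a).val := by
        rcases h3 with ⟨hc1, he1⟩ | ⟨hc1, he1⟩ <;>
          rcases h4 with ⟨hc2, he2⟩ | ⟨hc2, he2⟩ <;> omega
      exact Finset.disjoint_left.mp hdis (mem_arcF.mpr hjA) (mem_arcF.mpr (by rw [hjc]; omega))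
    tauto

lemma xor_reduce {a b c d : ZMod n} (hab : a ≠ b) (hac : a ≠ c) (had : a ≠ d)
    (hbc : b ≠ c) (hbd : b ≠ d)
    (h : Xor' (InArc b a c) (InArc b a d)) : Xor' (InArc a b c) (InArc a b d) := by
  rw [inArc_rev hab hac.symm hbc.symm, inArc_rev hab had.symm hbd.symm] at h
  unfold Xor' Xor at *
  tauto

lemma not_crosses_of_laminar {a b c d : ZMod n}
    (hl2 : 2 * (b - a).val < n) (hm2 : 2 * (d - c).val < n)
    (hab : a ≠ b) (hcd : c ≠ d)
    (hlam : arcF a (b - a).val ⊆ arcF c (d - c).val ∨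
      arcF c (d - c).val ⊆ arcF a (b - a).val ∨
      Disjoint (arcF a (b - a).val) (arcF c (d - c).val)) :
    ¬ Crosses s(a, b) s(c, d) := by
  rintro ⟨a₁, b₁, c₁, d₁, hp, hq, n1, n2, n3, n4, n5, n6, hx⟩
  rw [Sym2.eq_iff] at hp hq
  have main : ∀ x y : ZMod n, ((x = c ∧ y = d) ∨ (x = d ∧ y = c)) →
      a ≠ x → a ≠ y → b ≠ x → b ≠ y → ¬ Xor' (InArc a b x) (InArc a b y) := by
    rintro x y (⟨rfl, rfl⟩ | ⟨rfl, rfl⟩) h1 h2 h3 h4 hxor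
    · have := inArc_iff_of_laminar hl2 hm2 hab hcd h1 h2 h3 h4 hlam
      unfold Xor' Xor at hxor; tauto
    · have := inArc_iff_of_laminar hl2 hm2 hab hcd h2 h1 h4 h3 hlam
      unfold Xor' Xor at hxor; tauto
  rcases hp with ⟨rfl, rfl⟩ | ⟨rfl, rfl⟩
  · rcases hq with ⟨rfl, rfl⟩ | ⟨rfl, rfl⟩
    · exact main _ _ (Or.inl ⟨rfl, rfl⟩) n2 n3 n4 n5 hx
    · exact main _ _ (Or.inr ⟨rfl, rfl⟩) n2 n3 n4 n5 hx
  · rcases hq with ⟨rfl, rfl⟩ | ⟨rfl, rfl⟩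
    · exact main _ _ (Or.inl ⟨rfl, rfl⟩) n4 n5 n2 n3
        (xor_reduce n1.symm n4 n5 n2 n3 hx)
    · exact main _ _ (Or.inr ⟨rfl, rfl⟩) n4 n5 n2 n3
        (xor_reduce n1.symm n4 n5 n2 n3 hx)

lemma chordLen_mk (a b : ZMod n) : chordLen s(a,b) = min (b - a).val (a - b).val := rfl

lemma crosses_of_diameters {a b c d : ZMod n}
    (hab : a ≠ b) (hcd : c ≠ d)
    (hp : (b - a).val = (a - b).val) (hq : (d - c).val = (c - d).val)
    (hne : s(a, b) ≠ s(c, d)) : Crosses s(a, b) s(c, d) := by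
  have h1 := val_sub_add hab
  have h2 := val_sub_add hcd
  have hh : 2 * (b - a).val = n := by omega
  have hh' : (d - c).val = (b - a).val := by omega
  have hdc : d - c = b - a := ZMod.val_injective n hh'
  have hac : a ≠ c := by
    rintro rfl
    have : (b - a).val = (d - a).val := by omega
    exact hne (by rw [eq_of_val_sub_eq this])
  have had : a ≠ d := by
    intro h
    have hv1 : (c - a).val = (c - d).val := by rw [h]
    have hv : (c - a).val = (b - a).val := by omega
    have hcb : c = b := eq_of_val_sub_eq hv
    apply hne
    rw [hcb, ← h]
    exact Sym2.eq_swap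
  have hbc : b ≠ c := by
    intro h
    have hv1 : (d - b).val = (d - c).val := by rw [h]
    have hv : (d - b).val = (a - b).val := by omega
    have hda : d = a := eq_of_val_sub_eq hv
    apply hne
    rw [← h, hda]
    exact Sym2.eq_swap
  have hbd : b ≠ d := by
    intro h
    have hv1 : (c - b).val = (c - d).val := by rw [h]
    have hv : (c - b).val = (a - b).val := by omega
    have hca : c = a := eq_of_val_sub_eq hv
    apply hne
    rw [hca, ← h]
  refine ⟨a, b, c, d, rfl, rfl, hab, hac, had, hbc, hbd, hcd, ?_⟩
  have hα0 : (c - a).val ≠ 0 := val_sub_ne_zero hac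
  have hβ0 : (d - a).val ≠ 0 := val_sub_ne_zero had
  have hαl : (c - a).val ≠ (b - a).val := fun h => hbc ((eq_of_val_sub_eq h).symm)
  have hβl : (d - a).val ≠ (b - a).val := fun h => hbd ((eq_of_val_sub_eq h).symm)
  have hαlt := (c - a).val_lt
  have hβlt := (d - a).val_lt
  have hβrel : (d - a) = (d - c) + (c - a) := by ring
  have h3 := val_add_cases (d - c) (c - a)
  rw [← hβrel] at h3
  rw [hh'] at h3
  unfold Xor' Xor InArc
  rcases h3 with ⟨hc1, he1⟩ | ⟨hc1, he1⟩ <;> omega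

end Toolkit

section Abstract
variable {α : Type*} [DecidableEq α]

def Laminar (G : Finset (Finset α)) : Prop :=
  ∀ A ∈ G, ∀ B ∈ G, A ⊆ B ∨ B ⊆ A ∨ Disjoint A B

noncomputable def Mx (G : Finset (Finset α)) : Finset (Finset α) :=
  G.filter (fun A => ∀ B ∈ G, A ⊆ B → A = B)

lemma below_max {G : Finset (Finset α)} {A : Finset α} (hA : A ∈ G) :
    ∃ M ∈ Mx G, A ⊆ M := by
  classical
  set S := G.filter (fun B => A ⊆ B) with hS
  have hAS : A ∈ S := by simp [hS, hA]
  obtain ⟨M, hMS, hMmax⟩ := S.exists_max_image Finset.card ⟨A, hAS⟩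
  simp only [hS, Finset.mem_filter] at hMS
  refine ⟨M, ?_, hMS.2⟩
  simp only [Mx, Finset.mem_filter]
  refine ⟨hMS.1, fun B hB hMB => ?_⟩
  have hBS : B ∈ S := by simp [hS, hB, hMS.2.trans hMB]
  exact Finset.eq_of_subset_of_card_le hMB (hMmax B hBS)

lemma mx_nonempty {G : Finset (Finset α)} (h : G.Nonempty) : (Mx G).Nonempty := by
  obtain ⟨A, hA⟩ := h
  obtain ⟨M, hM, -⟩ := below_max hA
  exact ⟨M, hM⟩

/-- Partition data for a maximal-cardinality element. -/
lemma laminar_partition {G : Finset (Finset α)} (hG : Laminar G)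
    (hc : ∀ A ∈ G, 2 ≤ A.card) {M : Finset α} (hM : M ∈ G)
    (hmax : ∀ B ∈ G, B.card ≤ M.card) :
    (∀ B ∈ G, B = M ∨ B ∈ G.filter (fun B => B ⊆ M ∧ B ≠ M) ∨
        B ∈ G.filter (fun B => Disjoint B M)) ∧
    G.card = 1 + (G.filter (fun B => B ⊆ M ∧ B ≠ M)).card +
        (G.filter (fun B => Disjoint B M)).card := by
  classical
  set Gin := G.filter (fun B => B ⊆ M ∧ B ≠ M) with hGin
  set Gout := G.filter (fun B => Disjoint B M) with hGout
  have htri : ∀ B ∈ G, B = M ∨ B ∈ Gin ∨ B ∈ Gout := by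
    intro B hB
    by_cases hBM : B = M
    · exact Or.inl hBM
    rcases hG B hB M hM with h | h | h
    · exact Or.inr (Or.inl (by simp [hGin, hB, h, hBM]))
    · exact absurd (Finset.eq_of_subset_of_card_le h (hmax B hB)).symm hBM
    · exact Or.inr (Or.inr (by simp [hGout, hB, h]))
  refine ⟨htri, ?_⟩
  have hMnin : M ∉ Gin := by simp [hGin]
  have hMnout : M ∉ Gout := by
    simp only [hGout, Finset.mem_filter]
    rintro ⟨-, h⟩
    have hMe : M = ∅ := by simpa using disjoint_self.mp h
    have := hc M hM; rw [hMe] at this; simp at this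
  have hdisj : Disjoint Gin Gout := by
    rw [Finset.disjoint_left]
    intro B hB1 hB2
    simp only [hGin, Finset.mem_filter] at hB1
    simp only [hGout, Finset.mem_filter] at hB2
    have hBne : B ≠ ∅ := by
      intro h; have := hc B hB1.1; rw [h] at this; simp at this
    exact hBne (Finset.subset_empty.mp (fun x hx =>
      (Finset.disjoint_left.mp hB2.2 hx (hB1.2.1 hx)).elim))
  have hupart : G = insert M (Gin ∪ Gout) := by
    ext B
    simp only [Finset.mem_insert, Finset.mem_union]
    constructor
    · intro hB
      rcases htri B hB with h | h | h
      exacts [Or.inl h, Or.inr (Or.inl h), Or.inr (Or.inr h)]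
    · rintro (rfl | h | h)
      · exact hM
      · exact (Finset.mem_filter.mp h).1
      · exact (Finset.mem_filter.mp h).1
  rw [hupart, Finset.card_insert_of_notMem (by
      simp only [Finset.mem_union]; tauto),
    Finset.card_union_of_disjoint hdisj]
  omega

lemma mx_partition {G : Finset (Finset α)} (hG : Laminar G)
    (hc : ∀ A ∈ G, 2 ≤ A.card) {M : Finset α} (hM : M ∈ G)
    (hmax : ∀ B ∈ G, B.card ≤ M.card) :
    Mx G = insert M (Mx (G.filter (fun B => Disjoint B M))) ∧
      M ∉ Mx (G.filter (fun B => Disjoint B M)) := by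
  classical
  set Gout := G.filter (fun B => Disjoint B M) with hGout
  have hMnout : M ∉ Gout := by
    simp only [hGout, Finset.mem_filter]
    rintro ⟨-, h⟩
    have hMe : M = ∅ := by simpa using disjoint_self.mp h
    have := hc M hM; rw [hMe] at this; simp at this
  have hem : ∀ B ∈ G, B.Nonempty := by
    intro B hB
    have := hc B hB
    exact Finset.card_pos.mp (by omega)
  constructor
  · ext A
    constructor
    · intro hA
      rw [Finset.mem_insert]
      obtain ⟨hAG, hmaxA⟩ := Finset.mem_filter.mp hA
      by_cases hAM : A = M
      · exact Or.inl hAM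
      have hAout : Disjoint A M := by
        rcases hG A hAG M hM with h | h | h
        · exact absurd (hmaxA M hM h) hAM
        · exact absurd (Finset.eq_of_subset_of_card_le h (hmax A hAG)).symm hAM
        · exact h
      refine Or.inr (Finset.mem_filter.mpr ⟨Finset.mem_filter.mpr ⟨hAG, hAout⟩, ?_⟩)
      intro B hB hAB
      exact hmaxA B (Finset.mem_filter.mp hB).1 hAB
    · intro hA
      rw [Finset.mem_insert] at hA
      rcases hA with rfl | hA
      · exact Finset.mem_filter.mpr ⟨hM, fun B hB hMB =>
          Finset.eq_of_subset_of_card_le hMB (hmax B hB)⟩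
      obtain ⟨hAout', hmaxA⟩ := Finset.mem_filter.mp hA
      obtain ⟨hAG, hAout⟩ := Finset.mem_filter.mp hAout'
      refine Finset.mem_filter.mpr ⟨hAG, fun B hB hAB => ?_⟩
      rcases eq_or_ne B M with rfl | hBM
      · exfalso
        obtain ⟨x, hx⟩ := hem A hAG
        exact Finset.disjoint_left.mp hAout hx (hAB hx)
      have hBout : Disjoint B M := by
        rcases hG B hB M hM with h | h | h
        · exfalso
          obtain ⟨x, hx⟩ := hem A hAG
          exact Finset.disjoint_left.mp hAout hx (h (hAB hx))
        · exact absurd (Finset.eq_of_subset_of_card_le h (hmax B hB)).symm hBM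
        · exact h
      exact hmaxA B (Finset.mem_filter.mpr ⟨hB, hBout⟩) hAB
  · exact fun h => hMnout (Finset.filter_subset _ _ h)

lemma gin_core {H : Finset (Finset α)} {M : Finset α} (hM2 : 2 ≤ M.card)
    (hsub : ∀ A ∈ H, A ⊆ M ∧ A ≠ M)
    (hSL : H.card + (Mx H).card ≤ (H.sup id).card) :
    H.card + 2 ≤ M.card := by
  classical
  rcases H.eq_empty_or_nonempty with rfl | hne
  · simpa using hM2
  have hsup : H.sup id ⊆ M := Finset.sup_le (fun A hA => (hsub A hA).1)
  have hsupc : (H.sup id).card ≤ M.card := Finset.card_le_card hsup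
  obtain ⟨M2, hM2'⟩ := mx_nonempty hne
  rcases Nat.lt_or_ge (Mx H).card 2 with hlt | hge
  · -- unique maximal element
    have h1 : (Mx H).card = 1 := by
      have := Finset.card_pos.mpr ⟨M2, hM2'⟩; omega
    obtain ⟨M3, hM3⟩ := Finset.card_eq_one.mp h1
    have hM3H : M3 ∈ H := Finset.filter_subset _ _ (hM3 ▸ Finset.mem_singleton_self M3)
    have hsup2 : H.sup id ≤ M3 := by
      refine Finset.sup_le (fun A hA => ?_)
      obtain ⟨M', hM', hAM'⟩ := below_max hA
      rw [hM3, Finset.mem_singleton] at hM'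
      exact hM' ▸ hAM'
    have hss : M3 ⊂ M := Finset.ssubset_iff_subset_ne.mpr ⟨(hsub M3 hM3H).1, (hsub M3 hM3H).2⟩
    have := Finset.card_lt_card hss
    have := Finset.card_le_card hsup2
    omega
  · omega

lemma SL3 (G : Finset (Finset α)) (hG : Laminar G) (hc : ∀ A ∈ G, 2 ≤ A.card) :
    G.card + (Mx G).card ≤ (G.sup id).card := by
  classical
  induction G using Finset.strongInduction with
  | _ G IH =>
    rcases G.eq_empty_or_nonempty with rfl | hne
    · simp [Mx]
    obtain ⟨M, hM, hmax⟩ := G.exists_max_image Finset.card hne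
    set Gin := G.filter (fun B => B ⊆ M ∧ B ≠ M) with hGin
    set Gout := G.filter (fun B => Disjoint B M) with hGout
    obtain ⟨htri, hcard⟩ := laminar_partition hG hc hM hmax
    obtain ⟨hmx, hMnmx⟩ := mx_partition hG hc hM hmax
    have hGinss : Gin ⊂ G := Finset.ssubset_iff_of_subset (Finset.filter_subset _ _)
      |>.mpr ⟨M, hM, by simp [hGin]⟩
    have hMnout : M ∉ Gout := by
      simp only [hGout, Finset.mem_filter]
      rintro ⟨-, h⟩
      have hMe : M = ∅ := by simpa using disjoint_self.mp h
      have := hc M hM; rw [hMe] at this; simp at this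
    have hGoutss : Gout ⊂ G :=
      Finset.ssubset_iff_of_subset (Finset.filter_subset _ _) |>.mpr ⟨M, hM, hMnout⟩
    rw [← hGin, ← hGout] at hcard
    rw [← hGout] at hmx hMnmx
    -- laminar and card restrict
    have hGinlam : Laminar Gin := fun A hA B hB =>
      hG A (Finset.filter_subset _ _ hA) B (Finset.filter_subset _ _ hB)
    have hGoutlam : Laminar Gout := fun A hA B hB =>
      hG A (Finset.filter_subset _ _ hA) B (Finset.filter_subset _ _ hB)
    have hGinc : ∀ A ∈ Gin, 2 ≤ A.card := fun A hA => hc A (Finset.filter_subset _ _ hA)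
    have hGoutc : ∀ A ∈ Gout, 2 ≤ A.card := fun A hA => hc A (Finset.filter_subset _ _ hA)
    have IHin := IH Gin hGinss hGinlam hGinc
    have IHout := IH Gout hGoutss hGoutlam hGoutc
    -- Gin bound
    have hginb : Gin.card + 2 ≤ M.card := by
      refine gin_core (hc M hM) ?_ IHin
      intro A hA
      exact (Finset.mem_filter.mp hA).2
    -- sup split
    have hsupeq : G.sup id = M ⊔ Gout.sup id := by
      apply le_antisymm
      · refine Finset.sup_le (fun B hB => ?_)
        rcases htri B hB with rfl | h | h
        · exact le_sup_left
        · exact le_trans (le_of_eq rfl) (le_sup_of_le_left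
            (by exact_mod_cast (Finset.mem_filter.mp h).2.1))
        · exact le_sup_of_le_right (Finset.le_sup (f := id) h)
      · exact sup_le (Finset.le_sup (f := id) hM)
          (Finset.sup_le (fun B hB => Finset.le_sup (f := id) (Finset.filter_subset _ _ hB)))
    have hsupdisj : Disjoint M (Gout.sup id) := by
      rw [Finset.disjoint_sup_right]
      intro B hB
      exact ((Finset.mem_filter.mp hB).2).symm
    have hsupcard : (G.sup id).card = M.card + (Gout.sup id).card := by
      rw [hsupeq, Finset.sup_eq_union, Finset.card_union_of_disjoint hsupdisj]
    have hmxcard : (Mx G).card = 1 + (Mx Gout).card := by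
      rw [hmx, Finset.card_insert_of_notMem hMnmx]; omega
    omega

lemma gin_bound {H : Finset (Finset α)} {M : Finset α} (hM2 : 2 ≤ M.card)
    (hH : Laminar H) (hc : ∀ A ∈ H, 2 ≤ A.card)
    (hsub : ∀ A ∈ H, A ⊆ M ∧ A ≠ M) :
    H.card + 2 ≤ M.card :=
  gin_core hM2 hsub (SL3 H hH hc)

noncomputable def depth (G : Finset (Finset α)) (e : α) : ℕ :=
  (G.filter (fun A => e ∈ A)).card

lemma depth_sum (G : Finset (Finset α)) : ∀ (E : Finset α), Laminar G →
    (∀ A ∈ G, 2 ≤ A.card) → (∀ A ∈ G, A ⊆ E) →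
    ∑ e ∈ E, ((2 : ℚ)⁻¹) ^ depth G e ≤ (E.card : ℚ) - G.card := by
  classical
  induction G using Finset.strongInduction with
  | _ G IH =>
    intro E hG hc hE
    rcases G.eq_empty_or_nonempty with rfl | hne
    · simp [depth]
    obtain ⟨M, hM, hmax⟩ := G.exists_max_image Finset.card hne
    set Gin := G.filter (fun B => B ⊆ M ∧ B ≠ M) with hGin
    set Gout := G.filter (fun B => Disjoint B M) with hGout
    obtain ⟨htri, hcard⟩ := laminar_partition hG hc hM hmax
    rw [← hGin, ← hGout] at hcard
    have hMsubE : M ⊆ E := hE M hM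
    have hGinlam : Laminar Gin := fun A hA B hB =>
      hG A (Finset.filter_subset _ _ hA) B (Finset.filter_subset _ _ hB)
    have hGoutlam : Laminar Gout := fun A hA B hB =>
      hG A (Finset.filter_subset _ _ hA) B (Finset.filter_subset _ _ hB)
    have hGinc : ∀ A ∈ Gin, 2 ≤ A.card := fun A hA => hc A (Finset.filter_subset _ _ hA)
    have hGoutc : ∀ A ∈ Gout, 2 ≤ A.card := fun A hA => hc A (Finset.filter_subset _ _ hA)
    have hMnin : M ∉ Gin := by simp [hGin]
    have hMnout : M ∉ Gout := by
      simp only [hGout, Finset.mem_filter]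
      rintro ⟨-, h⟩
      have hMe : M = ∅ := by simpa using disjoint_self.mp h
      have := hc M hM; rw [hMe] at this; simp at this
    have hGinss : Gin ⊂ G :=
      Finset.ssubset_iff_of_subset (Finset.filter_subset _ _) |>.mpr ⟨M, hM, hMnin⟩
    have hGoutss : Gout ⊂ G :=
      Finset.ssubset_iff_of_subset (Finset.filter_subset _ _) |>.mpr ⟨M, hM, hMnout⟩
    -- depth identities
    have hdM : ∀ e ∈ M, depth G e = 1 + depth Gin e := by
      intro e he
      have hset : G.filter (fun A => e ∈ A) =
          insert M (Gin.filter (fun A => e ∈ A)) := by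
        ext B
        simp only [Finset.mem_filter, Finset.mem_insert]
        constructor
        · rintro ⟨hBG, heB⟩
          rcases htri B hBG with rfl | h | h
          · exact Or.inl rfl
          · exact Or.inr ⟨h, heB⟩
          · exfalso
            exact Finset.disjoint_left.mp (Finset.mem_filter.mp h).2 heB he
        · rintro (rfl | ⟨hBGin, heB⟩)
          · exact ⟨hM, he⟩
          · exact ⟨Finset.filter_subset _ _ hBGin, heB⟩
      have hMn : M ∉ Gin.filter (fun A => e ∈ A) :=
        fun h => hMnin (Finset.filter_subset _ _ h)
      rw [depth, hset, Finset.card_insert_of_notMem hMn]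
      simp only [depth]
      omega
    have hdO : ∀ e ∈ E \ M, depth G e = depth Gout e := by
      intro e he
      obtain ⟨heE, heM⟩ := Finset.mem_sdiff.mp he
      show (G.filter (fun A => e ∈ A)).card = (Gout.filter (fun A => e ∈ A)).card
      congr 1
      ext B
      simp only [Finset.mem_filter]
      constructor
      · rintro ⟨hBG, heB⟩
        rcases htri B hBG with rfl | h | h
        · exact absurd heB heM
        · exact absurd ((Finset.mem_filter.mp h).2.1 heB) heM
        · exact ⟨h, heB⟩
      · rintro ⟨hBGout, heB⟩
        exact ⟨Finset.filter_subset _ _ hBGout, heB⟩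
    -- split sum
    have hsplit : ∑ e ∈ E, ((2 : ℚ)⁻¹) ^ depth G e =
        ∑ e ∈ E \ M, ((2 : ℚ)⁻¹) ^ depth G e + ∑ e ∈ M, ((2 : ℚ)⁻¹) ^ depth G e :=
      (Finset.sum_sdiff hMsubE).symm
    have hsum1 : ∑ e ∈ M, ((2 : ℚ)⁻¹) ^ depth G e =
        (2 : ℚ)⁻¹ * ∑ e ∈ M, ((2 : ℚ)⁻¹) ^ depth Gin e := by
      rw [Finset.mul_sum]
      refine Finset.sum_congr rfl (fun e he => ?_)
      rw [hdM e he, pow_add, pow_one]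
    have hsum2 : ∑ e ∈ E \ M, ((2 : ℚ)⁻¹) ^ depth G e =
        ∑ e ∈ E \ M, ((2 : ℚ)⁻¹) ^ depth Gout e :=
      Finset.sum_congr rfl (fun e he => by rw [hdO e he])
    have IHin := IH Gin hGinss M hGinlam hGinc
      (fun A hA => (Finset.mem_filter.mp hA).2.1)
    have IHout := IH Gout hGoutss (E \ M) hGoutlam hGoutc
      (fun A hA => Finset.subset_sdiff.mpr
        ⟨hE A (Finset.filter_subset _ _ hA), (Finset.mem_filter.mp hA).2⟩)
    have hginb : Gin.card + 2 ≤ M.card := by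
      refine gin_bound (hc M hM) hGinlam hGinc ?_
      intro A hA
      exact (Finset.mem_filter.mp hA).2
    have hcardsd : ((E \ M).card : ℚ) = (E.card : ℚ) - M.card := by
      rw [Finset.card_sdiff_of_subset hMsubE]
      exact_mod_cast Nat.cast_sub (Finset.card_le_card hMsubE)
    have hq : (Gin.card : ℚ) + 2 ≤ (M.card : ℚ) := by exact_mod_cast hginb
    have hGcard : (G.card : ℚ) = 1 + Gin.card + Gout.card := by exact_mod_cast hcard
    have h2 : (0 : ℚ) ≤ (2 : ℚ)⁻¹ := by norm_num
    have hmul : (2 : ℚ)⁻¹ * ∑ e ∈ M, ((2 : ℚ)⁻¹) ^ depth Gin e ≤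
        (2 : ℚ)⁻¹ * ((M.card : ℚ) - Gin.card) := mul_le_mul_of_nonneg_left IHin h2
    rw [hsplit, hsum1, hsum2]
    rw [hcardsd] at IHout
    linarith [hmul, IHout, hq, hGcard]

end Abstract


section PartTwo
variable {n : ℕ} [NeZero n]

lemma chordLen_mk' (a b : ZMod n) : chordLen s(a,b) = min (b - a).val (a - b).val := rfl

lemma layers_iff {a b : ZMod n} (h : (b - a).val < (a - b).val) (i : ZMod n) :
    LayersEdge s(a,b) i ↔ (i - a).val < (b - a).val := by
  constructor
  · rintro ⟨a', b', heq, h1, h2⟩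
    rw [Sym2.eq_iff] at heq
    rcases heq with ⟨rfl, rfl⟩ | ⟨rfl, rfl⟩
    · exact h2
    · omega
  · intro hi
    exact ⟨a, b, rfl, h, hi⟩

lemma exists_canonical (p : Sym2 (ZMod n)) :
    ∃ a b : ZMod n, p = s(a,b) ∧ (b - a).val ≤ (a - b).val := by
  induction p with
  | _ x y =>
    rcases le_total ((y - x).val) ((x - y).val) with h | h
    · exact ⟨x, y, rfl, h⟩
    · exact ⟨y, x, Sym2.eq_swap.symm, h⟩

lemma card_arcF (a : ZMod n) {ℓ : ℕ} (hℓ : ℓ ≤ n) :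
    (arcF a ℓ).card = ℓ := by
  have himg : arcF a ℓ = (Finset.range ℓ).image (fun t : ℕ => a + (t : ZMod n)) := by
    ext i
    simp only [mem_arcF, Finset.mem_image, Finset.mem_range]
    constructor
    · intro hi
      refine ⟨(i - a).val, hi, ?_⟩
      rw [ZMod.natCast_val, ZMod.cast_id]; ring
    · rintro ⟨t, ht, rfl⟩
      have : (a + t - a : ZMod n) = (t : ZMod n) := by ring
      rw [this, ZMod.val_cast_of_lt (lt_of_lt_of_le ht hℓ)]; exact ht
  rw [himg, Finset.card_image_of_injOn, Finset.card_range]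
  intro x hx y hy hxy
  simp only [Finset.mem_coe, Finset.mem_range] at hx hy
  have hcast : (x : ZMod n) = y := by
    have := congrArg (· - a) hxy; simpa using this
  have := congrArg ZMod.val hcast
  rwa [ZMod.val_cast_of_lt (lt_of_lt_of_le hx hℓ),
    ZMod.val_cast_of_lt (lt_of_lt_of_le hy hℓ)] at this

noncomputable def arcOf (p : Sym2 (ZMod n)) : Finset (ZMod n) :=
  Finset.univ.filter (fun i => LayersEdge p i)

lemma mem_arcOf {p : Sym2 (ZMod n)} {i : ZMod n} : i ∈ arcOf p ↔ LayersEdge p i := by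
  simp [arcOf]

/-- canonical data for a non-diameter chord of length ≥ 2 -/
lemma chord_props {p : Sym2 (ZMod n)} (hp2 : 2 ≤ chordLen p) (hnd : ¬ IsDiameter p) :
    ∃ a b : ZMod n, p = s(a,b) ∧ (b - a).val = chordLen p ∧ 2 * (b - a).val < n ∧
      a ≠ b ∧ arcOf p = arcF a (b - a).val := by
  obtain ⟨a, b, rfl, hle⟩ := exists_canonical p
  have hab : a ≠ b := by
    rintro rfl
    rw [chordLen_mk'] at hp2
    simp at hp2
  have hsum := val_sub_add hab
  have hlen : chordLen s(a,b) = (b - a).val := by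
    rw [chordLen_mk']; omega
  have hstrict : 2 * (b - a).val < n := by
    rw [IsDiameter, hlen] at hnd
    omega
  refine ⟨a, b, rfl, hlen.symm, hstrict, hab, ?_⟩
  ext i
  rw [mem_arcOf, mem_arcF, layers_iff (by omega)]

theorem part_two (k : ℕ) (hk : 1 ≤ k) (n : ℕ) (T : Finset (Sym2 (ZMod n)))
    (hT : IsTriangulation n T) (hm : ∀ i : ZMod n, mT n T i ≤ 2 * k) :
    n ≤ 3 * 2 ^ k := by
  classical
  by_contra hbig
  push_neg at hbig
  have h2k : 2 ≤ 2 ^ k := by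
    calc 2 = 2 ^ 1 := (pow_one 2).symm
    _ ≤ 2 ^ k := Nat.pow_le_pow_right (by norm_num) hk
  have hn7 : 6 < n := by omega
  haveI : NeZero n := ⟨by omega⟩
  obtain ⟨hcard, hlen, hcross⟩ := hT
  set Td := T.filter (fun p => IsDiameter p) with hTd
  set Tn := T.filter (fun p => ¬ IsDiameter p) with hTn
  -- at most one diameter
  have hD1 : Td.card ≤ 1 := by
    by_contra hD
    push_neg at hD
    obtain ⟨p, hp, q, hq, hpq⟩ := Finset.one_lt_card.mp hD
    obtain ⟨hpT, hpd⟩ := Finset.mem_filter.mp hp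
    obtain ⟨hqT, hqd⟩ := Finset.mem_filter.mp hq
    obtain ⟨a, b, rfl, hab1⟩ := exists_canonical p
    obtain ⟨c, d, rfl, hcd1⟩ := exists_canonical q
    have hab : a ≠ b := by
      rintro rfl
      have := hlen _ hpT
      rw [chordLen_mk'] at this
      simp at this
    have hcd : c ≠ d := by
      rintro rfl
      have := hlen _ hqT
      rw [chordLen_mk'] at this
      simp at this
    have hs1 := val_sub_add hab
    have hs2 := val_sub_add hcd
    rw [IsDiameter, chordLen_mk'] at hpd hqd
    exact hcross _ hpT _ hqT hpq
      (crosses_of_diameters hab hcd (by omega) (by omega) hpq)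
  -- the laminar family of arcs
  set G := Tn.image arcOf with hG
  have hTnmem : ∀ p ∈ Tn, 2 ≤ chordLen p ∧ ¬ IsDiameter p := by
    intro p hp
    obtain ⟨hpT, hpd⟩ := Finset.mem_filter.mp hp
    exact ⟨hlen p hpT, hpd⟩
  have hinj : Set.InjOn arcOf (Tn : Set (Sym2 (ZMod n))) := by
    intro p hp q hq heq
    obtain ⟨hp2, hpd⟩ := hTnmem p hp
    obtain ⟨hq2, hqd⟩ := hTnmem q hq
    obtain ⟨a, b, rfl, hla, hsa, haba, hEa⟩ := chord_props hp2 hpd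
    obtain ⟨c, d, rfl, hlc, hsc, habc, hEc⟩ := chord_props hq2 hqd
    rw [hEa, hEc] at heq
    have hcards : (b - a).val = (d - c).val := by
      have h1 := card_arcF (n := n) a (ℓ := (b - a).val) (by omega)
      have h2 := card_arcF (n := n) c (ℓ := (d - c).val) (by omega)
      rw [← h1, ← h2, heq]
    have hac : a = c := by
      by_contra hne
      have hc1 : c ∈ arcF a (b - a).val := by
        rw [heq, mem_arcF, sub_self, ZMod.val_zero]
        have := val_sub_ne_zero habc; omega
      have hc2 : a ∈ arcF c (d - c).val := by
        rw [← heq, mem_arcF, sub_self, ZMod.val_zero]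
        have := val_sub_ne_zero haba; omega
      rw [mem_arcF] at hc1 hc2
      have := val_sub_add (fun h : a = c => hne h)
      omega
    subst hac
    have : b = d := eq_of_val_sub_eq (by rw [hcards])
    rw [this]
  have hGcard : G.card = Tn.card := Finset.card_image_of_injOn hinj
  have hTcards : Td.card + Tn.card = T.card := by
    rw [hTd, hTn]
    exact Finset.card_filter_add_card_filter_not _
  -- properties of G
  have hGprops : ∀ A ∈ G, ∃ p ∈ Tn, ∃ a : ZMod n, ∃ ℓ : ℕ,
      A = arcF a ℓ ∧ 2 ≤ ℓ ∧ 2 * ℓ < n ∧ arcOf p = A := by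
    intro A hA
    obtain ⟨p, hp, rfl⟩ := Finset.mem_image.mp hA
    obtain ⟨hp2, hpd⟩ := hTnmem p hp
    obtain ⟨a, b, hpe, hla, hsa, hab, hEa⟩ := chord_props hp2 hpd
    exact ⟨p, hp, a, (b - a).val, hEa, by omega, hsa, rfl⟩
  have hGC : ∀ A ∈ G, 2 ≤ A.card := by
    intro A hA
    obtain ⟨p, hp, a, ℓ, rfl, hℓ2, hℓn, -⟩ := hGprops A hA
    rw [card_arcF a (by omega)]
    exact hℓ2
  have hGlam : Laminar G := by
    intro A hA B hB
    obtain ⟨p, hp, a, ℓ, hAe, hℓ2, hℓn, hpA⟩ := hGprops A hA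
    obtain ⟨q, hq, c, m, hBe, hm2', hmn, hqB⟩ := hGprops B hB
    by_cases hpq : p = q
    · subst hpq
      rw [← hpA, ← hqB]
      exact Or.inl (le_refl _)
    obtain ⟨hp2, hpd⟩ := hTnmem p hp
    obtain ⟨hq2, hqd⟩ := hTnmem q hq
    obtain ⟨a', b', hpe, hla, hsa, hab, hEa⟩ := chord_props hp2 hpd
    obtain ⟨c', d', hqe, hlc, hsc, hcd, hEc⟩ := chord_props hq2 hqd
    have hAe' : A = arcF a' (b' - a').val := by rw [← hpA, hEa]
    have hBe' : B = arcF c' (d' - c').val := by rw [← hqB, hEc]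
    rw [hAe', hBe']
    have hnc : ¬ Crosses s(a', b') s(c', d') := by
      rw [← hpe, ← hqe]
      exact hcross p (Finset.filter_subset _ _ hp) q (Finset.filter_subset _ _ hq) hpq
    refine key_nested hsa hsc hab hcd ?_
    intro h1 h2 h3 h4
    by_contra hxor
    refine hnc ⟨a', b', c', d', rfl, rfl, hab, h1, h2, h3, h4, hcd, ?_⟩
    unfold Xor' Xor
    tauto
  -- depth equality
  have hdepth : ∀ i : ZMod n,
      depth G i = (T.filter (fun p => LayersEdge p i ∧ ¬ IsDiameter p)).card := by
    intro i
    have h1 : G.filter (fun A => i ∈ A) = (Tn.filter (fun p => i ∈ arcOf p)).image arcOf := by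
      rw [hG, Finset.filter_image]
    have h2 : (Tn.filter (fun p => i ∈ arcOf p)).card =
        (Tn.filter (fun p => LayersEdge p i)).card := by
      congr 1
      exact Finset.filter_congr (fun p _ => by rw [mem_arcOf])
    have h3 : Tn.filter (fun p => LayersEdge p i) =
        T.filter (fun p => LayersEdge p i ∧ ¬ IsDiameter p) := by
      rw [hTn, Finset.filter_filter]
      exact Finset.filter_congr (fun p _ => by tauto)
    rw [depth, h1, Finset.card_image_of_injOn
      (hinj.mono (Finset.filter_subset _ _)), h2, h3]
  -- depth bound
  set D := Td.card with hDd
  have hdb : ∀ i : ZMod n, depth G i ≤ k - D := by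
    intro i
    have hthis := hm i
    rw [mT] at hthis
    have hlink : (T.filter (fun p => IsDiameter p)).card = D := by rw [hDd, hTd]
    rw [hdepth i]
    omega
  -- the main computation
  have hsum := depth_sum G Finset.univ hGlam hGC (fun A _ => A.subset_univ)
  have hlow : (Finset.univ.card (α := ZMod n)) • ((2:ℚ)⁻¹) ^ (k - D) ≤
      ∑ e ∈ Finset.univ, ((2:ℚ)⁻¹) ^ depth G e := by
    refine Finset.card_nsmul_le_sum _ _ _ ?_
    intro i _
    refine pow_le_pow_of_le_one (by norm_num) (by norm_num) (hdb i)
  have hcu : (Finset.univ.card (α := ZMod n)) = n := by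
    rw [Finset.card_univ, ZMod.card]
  have hGn : G.card = n - 3 - D := by omega
  have hD1' : D ≤ 1 := hD1
  have hpow : (0:ℚ) < 2 ^ (k - D) := by positivity
  have hfin : (n : ℚ) ≤ (3 + D) * 2 ^ (k - D) := by
    have hx : ((2:ℚ)⁻¹) ^ (k - D) = ((2:ℚ) ^ (k - D))⁻¹ := by
      rw [inv_pow]
    have hineq : (n : ℚ) * ((2:ℚ) ^ (k - D))⁻¹ ≤ 3 + D := by
      have hcast : ((G.card : ℚ)) = (n : ℚ) - 3 - D := by
        rw [hGn]
        have : (3:ℕ) + D ≤ n := by omega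
        push_cast [Nat.cast_sub (show D ≤ n - 3 by omega), Nat.cast_sub (show 3 ≤ n by omega)]
        ring
      rw [hcu, hx] at hlow
      rw [hcast] at hsum
      have hc2 : ((Finset.univ.card (α := ZMod n) : ℚ)) = (n : ℚ) := by
        rw [hcu]
      rw [hc2] at hsum
      calc (n : ℚ) * ((2:ℚ) ^ (k - D))⁻¹ = n • ((2:ℚ) ^ (k - D))⁻¹ := by
            rw [nsmul_eq_mul]
        _ ≤ ∑ e ∈ Finset.univ, ((2:ℚ)⁻¹) ^ depth G e := hlow
        _ ≤ (n : ℚ) - ((n : ℚ) - 3 - D) := hsum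
        _ = 3 + D := by ring
    have hdiv : (n : ℚ) / 2 ^ (k - D) ≤ 3 + D := by rwa [div_eq_mul_inv]
    exact (div_le_iff₀ hpow).mp hdiv
  have hfinN : n ≤ (3 + D) * 2 ^ (k - D) := by exact_mod_cast hfin
  rcases Nat.le_one_iff_eq_zero_or_eq_one.mp hD1' with hD0 | hD0 <;> rw [hD0] at hfinN
  · rw [Nat.sub_zero] at hfinN
    omega
  · have hks : 2 ^ k = 2 * 2 ^ (k - 1) := by
      rw [← pow_succ']
      congr 1
      omega
    have hx1 : 1 ≤ 2 ^ (k - 1) := Nat.one_le_two_pow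
    omega

end PartTwo

section PartOne

variable {n : ℕ} [NeZero n]

lemma interval_chord {x L : ℕ} (hL0 : 0 < L) (hxL : x + L ≤ n) (i : ZMod n) :
    (i - ((x : ℕ) : ZMod n)).val < L ↔ x ≤ i.val ∧ i.val < x + L := by
  have hx : ((x : ℕ) : ZMod n).val = x := ZMod.val_cast_of_lt (by omega)
  have hrel : i = (i - ((x : ℕ) : ZMod n)) + ((x : ℕ) : ZMod n) := by ring
  have h4 := val_add_cases (i - ((x : ℕ) : ZMod n)) ((x : ℕ) : ZMod n)
  rw [← hrel, hx] at h4
  have hv1 := (i - ((x : ℕ) : ZMod n)).val_lt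
  have hv2 := i.val_lt
  rcases h4 with ⟨hc, he⟩ | ⟨hc, he⟩ <;> omega

lemma chordA_vals {s j : ℕ} (h2s : 2 * 2 ^ s < n) (hj : (j + 1) * 2 ^ s ≤ n) :
    ((((j+1) * 2^s : ℕ) : ZMod n) - ((j * 2^s : ℕ) : ZMod n)).val = 2 ^ s ∧
    (((j * 2^s : ℕ) : ZMod n) - (((j+1) * 2^s : ℕ) : ZMod n)).val = n - 2 ^ s := by
  have hpw : (0:ℕ) < 2 ^ s := pow_pos (by norm_num) s
  have hsub : (((j+1) * 2^s : ℕ) : ZMod n) - ((j * 2^s : ℕ) : ZMod n) = ((2^s : ℕ) : ZMod n) := by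
    have he : (j+1) * 2^s = j * 2^s + 2^s := by ring
    rw [he]
    push_cast
    ring
  have h1 : ((2^s : ℕ) : ZMod n).val = 2^s := ZMod.val_cast_of_lt (by omega)
  have hba : ((((j+1) * 2^s : ℕ) : ZMod n) - ((j * 2^s : ℕ) : ZMod n)).val = 2 ^ s := by
    rw [hsub, h1]
  refine ⟨hba, ?_⟩
  have hne : ((j * 2^s : ℕ) : ZMod n) ≠ (((j+1) * 2^s : ℕ) : ZMod n) := by
    intro h
    rw [h, sub_self, ZMod.val_zero] at hba
    omega
  have := val_sub_add hne
  omega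

lemma layers_chordA {s j : ℕ} (h2s : 2 * 2 ^ s < n) (hj : (j + 1) * 2 ^ s ≤ n) (i : ZMod n) :
    LayersEdge s(((j * 2^s : ℕ) : ZMod n), (((j+1) * 2^s : ℕ) : ZMod n)) i ↔
      j * 2^s ≤ i.val ∧ i.val < (j+1) * 2^s := by
  have hpw : (0:ℕ) < 2 ^ s := pow_pos (by norm_num) s
  have hsplit : (j+1) * 2^s = j * 2^s + 2^s := by ring
  obtain ⟨h1, h2⟩ := chordA_vals (n := n) (s := s) (j := j) h2s hj
  rw [layers_iff (by omega), h1,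
    interval_chord hpw (by omega : j * 2^s + 2^s ≤ n)]
  constructor <;> rintro ⟨u, v⟩ <;> exact ⟨u, by omega⟩

lemma chordLen_chordA {s j : ℕ} (h2s : 2 * 2 ^ s < n) (hj : (j + 1) * 2 ^ s ≤ n) :
    chordLen s(((j * 2^s : ℕ) : ZMod n), (((j+1) * 2^s : ℕ) : ZMod n)) = 2 ^ s := by
  obtain ⟨h1, h2⟩ := chordA_vals (n := n) (s := s) (j := j) h2s hj
  rw [chordLen_mk', h1, h2]
  omega

lemma arcF_incl {x L x' L' : ℕ} (hL0 : 0 < L) (hxL : x + L ≤ n)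
    (hL0' : 0 < L') (hxL' : x' + L' ≤ n) (h1 : x' ≤ x) (h2 : x + L ≤ x' + L') :
    arcF ((x : ℕ) : ZMod n) L ⊆ arcF ((x' : ℕ) : ZMod n) L' := by
  intro i hi
  rw [mem_arcF, interval_chord hL0 hxL] at hi
  rw [mem_arcF, interval_chord hL0' hxL']
  omega

lemma arcF_disj {x L x' L' : ℕ} (hL0 : 0 < L) (hxL : x + L ≤ n)
    (hL0' : 0 < L') (hxL' : x' + L' ≤ n) (h : x + L ≤ x' ∨ x' + L' ≤ x) :
    Disjoint (arcF ((x : ℕ) : ZMod n) L) (arcF ((x' : ℕ) : ZMod n) L') := by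
  rw [Finset.disjoint_left]
  intro i hi1 hi2
  rw [mem_arcF, interval_chord hL0 hxL] at hi1
  rw [mem_arcF, interval_chord hL0' hxL'] at hi2
  omega

lemma dyadic {s s' j j' : ℕ} (h : s ≤ s') :
    (j' * 2^s' ≤ j * 2^s ∧ (j+1) * 2^s ≤ (j'+1) * 2^s') ∨
      (j+1) * 2^s ≤ j' * 2^s' ∨ (j'+1) * 2^s' ≤ j * 2^s := by
  have h2 : 2^s' = 2^(s'-s) * 2^s := by
    rw [← pow_add]
    congr 1
    omega
  rcases le_or_gt (j' * 2^s') (j * 2^s) with hA | hA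
  · rcases lt_or_ge (j * 2^s) ((j'+1) * 2^s') with hB | hB
    · left
      refine ⟨hA, ?_⟩
      have hmul : j * 2^s < ((j'+1) * 2^(s'-s)) * 2^s := by
        calc j * 2^s < (j'+1) * 2^s' := hB
          _ = ((j'+1) * 2^(s'-s)) * 2^s := by rw [h2]; ring
      have hlt : j < (j'+1) * 2^(s'-s) := Nat.lt_of_mul_lt_mul_right hmul
      calc (j+1) * 2^s ≤ ((j'+1) * 2^(s'-s)) * 2^s := Nat.mul_le_mul_right _ (by omega)
        _ = (j'+1) * 2^s' := by rw [h2]; ring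
    · right; right; exact hB
  · right; left
    have hmul : j * 2^s < (j' * 2^(s'-s)) * 2^s := by
      calc j * 2^s < j' * 2^s' := hA
        _ = (j' * 2^(s'-s)) * 2^s := by rw [h2]; ring
    have hlt : j < j' * 2^(s'-s) := Nat.lt_of_mul_lt_mul_right hmul
    calc (j+1) * 2^s ≤ (j' * 2^(s'-s)) * 2^s := Nat.mul_le_mul_right _ (by omega)
      _ = j' * 2^s' := by rw [h2]; ring

lemma chordA_laminar {s j s' j' : ℕ}
    (h2s : 2 * 2 ^ s < n) (hj : (j + 1) * 2 ^ s ≤ n)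
    (h2s' : 2 * 2 ^ s' < n) (hj' : (j' + 1) * 2 ^ s' ≤ n) :
    arcF ((j * 2^s : ℕ) : ZMod n) (2^s) ⊆ arcF ((j' * 2^s' : ℕ) : ZMod n) (2^s') ∨
      arcF ((j' * 2^s' : ℕ) : ZMod n) (2^s') ⊆ arcF ((j * 2^s : ℕ) : ZMod n) (2^s) ∨
      Disjoint (arcF ((j * 2^s : ℕ) : ZMod n) (2^s))
        (arcF ((j' * 2^s' : ℕ) : ZMod n) (2^s')) := by
  have hpw : (0:ℕ) < 2 ^ s := pow_pos (by norm_num) s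
  have hpw' : (0:ℕ) < 2 ^ s' := pow_pos (by norm_num) s'
  have hsplit : (j+1) * 2^s = j * 2^s + 2^s := by ring
  have hsplit' : (j'+1) * 2^s' = j' * 2^s' + 2^s' := by ring
  have hxL : j * 2^s + 2^s ≤ n := by omega
  have hxL' : j' * 2^s' + 2^s' ≤ n := by omega
  rcases le_total s s' with h | h
  · rcases dyadic (j := j) (j' := j') h with ⟨u, v⟩ | h1 | h1
    · exact Or.inl (arcF_incl hpw hxL hpw' hxL' u (by omega))
    · exact Or.inr (Or.inr (arcF_disj hpw hxL hpw' hxL' (Or.inl (by omega))))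
    · exact Or.inr (Or.inr (arcF_disj hpw hxL hpw' hxL' (Or.inr (by omega))))
  · rcases dyadic (j := j') (j' := j) h with ⟨u, v⟩ | h1 | h1
    · exact Or.inr (Or.inl (arcF_incl hpw' hxL' hpw hxL u (by omega)))
    · exact Or.inr (Or.inr (arcF_disj hpw hxL hpw' hxL' (Or.inr (by omega))))
    · exact Or.inr (Or.inr (arcF_disj hpw hxL hpw' hxL' (Or.inl (by omega))))

end PartOne

/-- The balanced triangulation of the `3·2^k`-gon: all dyadic chords. -/
noncomputable def TA (k : ℕ) : Finset (Sym2 (ZMod (3 * 2 ^ k))) :=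
  (Finset.range k).biUnion (fun t => (Finset.range (3 * 2 ^ (k - 1 - t))).image
    (fun j => s(((j * 2 ^ (t+1) : ℕ) : ZMod (3 * 2 ^ k)),
      (((j + 1) * 2 ^ (t+1) : ℕ) : ZMod (3 * 2 ^ k)))))

lemma TA_bounds {k t j : ℕ} (ht : t < k) (hj : j < 3 * 2 ^ (k - 1 - t)) :
    2 * 2 ^ (t+1) < 3 * 2 ^ k ∧ (j + 1) * 2 ^ (t+1) ≤ 3 * 2 ^ k := by
  constructor
  · have h1 : 2 ^ (t+2) ≤ 2 ^ (k+1) := Nat.pow_le_pow_right (by norm_num) (by omega)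
    have h2 : (2:ℕ) ^ (k+1) = 2 * 2^k := by rw [pow_succ]; ring
    have h3 : (2:ℕ) ^ (t+2) = 2 * 2^(t+1) := by rw [pow_succ]; ring
    have h4 : (0:ℕ) < 2^k := pow_pos (by norm_num) k
    omega
  · have h1 : j + 1 ≤ 3 * 2 ^ (k - 1 - t) := by omega
    calc (j + 1) * 2 ^ (t+1) ≤ (3 * 2 ^ (k - 1 - t)) * 2 ^ (t+1) :=
          Nat.mul_le_mul_right _ h1
      _ = 3 * 2 ^ k := by
          rw [mul_assoc, ← pow_add]
          congr 2
          omega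

lemma mem_TA {k : ℕ} {p : Sym2 (ZMod (3 * 2 ^ k))} :
    p ∈ TA k ↔ ∃ t < k, ∃ j < 3 * 2 ^ (k - 1 - t),
      p = s(((j * 2 ^ (t+1) : ℕ) : ZMod (3 * 2 ^ k)),
        (((j + 1) * 2 ^ (t+1) : ℕ) : ZMod (3 * 2 ^ k))) := by
  simp only [TA, Finset.mem_biUnion, Finset.mem_range, Finset.mem_image]
  constructor
  · rintro ⟨t, ht, j, hj, rfl⟩
    exact ⟨t, ht, j, hj, rfl⟩
  · rintro ⟨t, ht, j, hj, rfl⟩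
    exact ⟨t, ht, j, hj, rfl⟩

lemma sum3pow (k : ℕ) : (∑ t ∈ Finset.range k, 3 * 2 ^ t) = 3 * 2 ^ k - 3 := by
  induction k with
  | zero => simp
  | succ m ih =>
    rw [Finset.sum_range_succ, ih, pow_succ]
    have : (0:ℕ) < 2 ^ m := pow_pos (by norm_num) m
    omega

theorem part_one (k : ℕ) (hk : 1 ≤ k) :
    IsTriangulation (3 * 2 ^ k) (TA k) ∧ (∀ p ∈ TA k, ¬ IsDiameter p) ∧
      ∀ i : ZMod (3 * 2 ^ k), mT (3 * 2 ^ k) (TA k) i ≤ 2 * k := by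
  haveI : NeZero (3 * 2 ^ k) := ⟨by positivity⟩
  -- no diameters
  have hnod : ∀ p ∈ TA k, ¬ IsDiameter p := by
    intro p hp
    obtain ⟨t, ht, j, hj, rfl⟩ := mem_TA.mp hp
    obtain ⟨hb1, hb2⟩ := TA_bounds ht hj
    rw [IsDiameter, chordLen_chordA hb1 hb2]
    omega
  -- lengths at least 2
  have hlen2 : ∀ p ∈ TA k, 2 ≤ chordLen p := by
    intro p hp
    obtain ⟨t, ht, j, hj, rfl⟩ := mem_TA.mp hp
    obtain ⟨hb1, hb2⟩ := TA_bounds ht hj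
    rw [chordLen_chordA hb1 hb2]
    calc (2:ℕ) = 2 ^ 1 := (pow_one 2).symm
      _ ≤ 2 ^ (t+1) := Nat.pow_le_pow_right (by norm_num) (by omega)
  -- injectivity within a level
  have hinj : ∀ t, t < k → Set.InjOn
      (fun j : ℕ => s(((j * 2 ^ (t+1) : ℕ) : ZMod (3 * 2 ^ k)),
        (((j + 1) * 2 ^ (t+1) : ℕ) : ZMod (3 * 2 ^ k))))
      ((Finset.range (3 * 2 ^ (k - 1 - t))) : Set ℕ) := by
    intro t ht j hj j' hj' heq
    simp only [Finset.coe_range, Set.mem_Iio] at hj hj'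
    obtain ⟨hb1, hb2⟩ := TA_bounds ht hj
    obtain ⟨hb1', hb2'⟩ := TA_bounds ht hj'
    have hpw : (0:ℕ) < 2 ^ (t+1) := pow_pos (by norm_num) _
    have hs1 : (j+1) * 2^(t+1) = j * 2^(t+1) + 2^(t+1) := by ring
    have hs1' : (j'+1) * 2^(t+1) = j' * 2^(t+1) + 2^(t+1) := by ring
    simp only [Sym2.eq_iff] at heq
    rcases heq with ⟨h1, h2⟩ | ⟨h1, h2⟩
    · have := congrArg ZMod.val h1
      rw [ZMod.val_cast_of_lt (by omega), ZMod.val_cast_of_lt (by omega)] at this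
      exact Nat.eq_of_mul_eq_mul_right hpw this
    · exfalso
      obtain ⟨hv1, hv2⟩ := chordA_vals hb1 hb2
      obtain ⟨hv1', hv2'⟩ := chordA_vals hb1' hb2'
      have hdd : (((j + 1) * 2 ^ (t+1) : ℕ) : ZMod (3 * 2 ^ k)) - ((j * 2 ^ (t+1) : ℕ) : ZMod (3 * 2 ^ k)) =
          ((j' * 2 ^ (t+1) : ℕ) : ZMod (3 * 2 ^ k)) - (((j' + 1) * 2 ^ (t+1) : ℕ) : ZMod (3 * 2 ^ k)) := by
        rw [h1, h2]
      have := congrArg ZMod.val hdd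
      rw [hv1, hv2'] at this
      omega
  -- cardinality
  have hcard : (TA k).card = 3 * 2 ^ k - 3 := by
    rw [TA, Finset.card_biUnion]
    · have hterm : ∀ t ∈ Finset.range k,
          ((Finset.range (3 * 2 ^ (k - 1 - t))).image
            (fun j => s(((j * 2 ^ (t+1) : ℕ) : ZMod (3 * 2 ^ k)),
              (((j + 1) * 2 ^ (t+1) : ℕ) : ZMod (3 * 2 ^ k))))).card = 3 * 2 ^ (k - 1 - t) := by
        intro t ht
        rw [Finset.card_image_of_injOn (hinj t (Finset.mem_range.mp ht)), Finset.card_range]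
      rw [Finset.sum_congr rfl hterm]
      have hrefl := Finset.sum_range_reflect (fun t => 3 * 2 ^ t) k
      rw [hrefl, sum3pow]
    · intro t ht t' ht' htt'
      rw [Finset.mem_coe, Finset.mem_range] at ht ht'
      rw [Function.onFun, Finset.disjoint_left]
      rintro p hp hp'
      rw [Finset.mem_image] at hp hp'
      obtain ⟨j, hj, rfl⟩ := hp
      obtain ⟨j', hj', he⟩ := hp'
      rw [Finset.mem_range] at hj hj'
      obtain ⟨hb1, hb2⟩ := TA_bounds ht hj
      obtain ⟨hb1', hb2'⟩ := TA_bounds ht' hj'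
      have hc1 := chordLen_chordA hb1 hb2
      have hc2 := chordLen_chordA hb1' hb2'
      have hpe : (2:ℕ) ^ (t'+1) = 2 ^ (t+1) := by rw [← hc2, he, hc1]
      have := Nat.pow_right_injective (le_refl 2) hpe
      omega
  -- non-crossing
  have hnc : ∀ p ∈ TA k, ∀ q ∈ TA k, p ≠ q → ¬ Crosses p q := by
    intro p hp q hq hpq
    obtain ⟨t, ht, j, hj, rfl⟩ := mem_TA.mp hp
    obtain ⟨t', ht', j', hj', rfl⟩ := mem_TA.mp hq
    obtain ⟨hb1, hb2⟩ := TA_bounds ht hj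
    obtain ⟨hb1', hb2'⟩ := TA_bounds ht' hj'
    obtain ⟨hv1, hv2⟩ := chordA_vals hb1 hb2
    obtain ⟨hv1', hv2'⟩ := chordA_vals hb1' hb2'
    have hpw : (0:ℕ) < 2 ^ (t+1) := pow_pos (by norm_num) _
    have hpw' : (0:ℕ) < 2 ^ (t'+1) := pow_pos (by norm_num) _
    have hab : ((j * 2 ^ (t+1) : ℕ) : ZMod (3 * 2 ^ k)) ≠
        (((j + 1) * 2 ^ (t+1) : ℕ) : ZMod (3 * 2 ^ k)) := by
      intro h
      rw [h, sub_self, ZMod.val_zero] at hv1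
      omega
    have hcd : ((j' * 2 ^ (t'+1) : ℕ) : ZMod (3 * 2 ^ k)) ≠
        (((j' + 1) * 2 ^ (t'+1) : ℕ) : ZMod (3 * 2 ^ k)) := by
      intro h
      rw [h, sub_self, ZMod.val_zero] at hv1'
      omega
    refine not_crosses_of_laminar (by rw [hv1]; exact hb1) (by rw [hv1']; exact hb1')
      hab hcd ?_
    rw [hv1, hv1']
    exact chordA_laminar hb1 hb2 hb1' hb2'
  refine ⟨⟨hcard, hlen2, hnc⟩, hnod, ?_⟩
  -- layer bound
  intro i
  rw [mT]
  have hdempty : (TA k).filter (fun p => IsDiameter p) = ∅ := by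
    rw [Finset.filter_eq_empty_iff]
    exact fun {p} hp => hnod p hp
  have hsub : (TA k).filter (fun p => LayersEdge p i ∧ ¬ IsDiameter p) ⊆
      (Finset.range k).image (fun t => s((((i.val / 2 ^ (t+1)) * 2 ^ (t+1) : ℕ) : ZMod (3 * 2 ^ k)),
        ((((i.val / 2 ^ (t+1)) + 1) * 2 ^ (t+1) : ℕ) : ZMod (3 * 2 ^ k))) ) := by
    intro p hp
    obtain ⟨hpT, hL, -⟩ := Finset.mem_filter.mp hp
    obtain ⟨t, ht, j, hj, rfl⟩ := mem_TA.mp hpT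
    obtain ⟨hb1, hb2⟩ := TA_bounds ht hj
    rw [layers_chordA hb1 hb2] at hL
    have hjdiv : i.val / 2 ^ (t+1) = j := Nat.div_eq_of_lt_le hL.1 hL.2
    rw [Finset.mem_image]
    exact ⟨t, Finset.mem_range.mpr ht, by rw [hjdiv]⟩
  have hcle := Finset.card_le_card hsub
  have hile : ((Finset.range k).image (fun t => s((((i.val / 2 ^ (t+1)) * 2 ^ (t+1) : ℕ) : ZMod (3 * 2 ^ k)),
      ((((i.val / 2 ^ (t+1)) + 1) * 2 ^ (t+1) : ℕ) : ZMod (3 * 2 ^ k))) )).card ≤ k := by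
    calc _ ≤ (Finset.range k).card := Finset.card_image_le
      _ = k := Finset.card_range k
  rw [hdempty]
  simp only [Finset.card_empty, add_zero]
  omega

/-- For every `k ≥ 1` there is a triangulation of the `3·2^k`-gon with no
diameter in which every boundary edge has layer number at most `k`; hence `3·2^k` is the
largest order of a triangulation all of whose boundary edges have layer number at most `k`. -/
theorem theta_eq (k : ℕ) (hk : 1 ≤ k) :
    (∃ T : Finset (Sym2 (ZMod (3 * 2 ^ k))), IsTriangulation (3 * 2 ^ k) T ∧
      (∀ p ∈ T, ¬ IsDiameter p) ∧
      ∀ i : ZMod (3 * 2 ^ k), mT (3 * 2 ^ k) T i ≤ 2 * k) ∧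
    (∀ n : ℕ, ∀ T : Finset (Sym2 (ZMod n)), IsTriangulation n T →
      (∀ i : ZMod n, mT n T i ≤ 2 * k) → n ≤ 3 * 2 ^ k) := by
  obtain ⟨h1, h2, h3⟩ := part_one k hk
  exact ⟨⟨TA k, h1, h2, h3⟩, fun n T hT hm => part_two k hk n T hT hm⟩
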